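/- Let u_1, u_2 be two elements of R_g = 𝔽_q[x]/(g(x)), with minimal-degree representatives u_1(x), u_2(x), and let n > r. Then u_2 belongs to the x-orbit of u_1 if and only if C^⊥_{u_1} = C^⊥_{u_2}, where C^⊥_{u} denotes the set of length-n windows of the Kronecker sequence of u(x). -/

import Mathlib

open Polynomial

section Aux
variable {F : Type} [Field F]

/-- predicate: `c` is the Kronecker sequence of `u` -/
def IsKron (g u : Polynomial F) (c : ℕ → F) : Prop :=
  u.degree < (g.natDegree : WithBot ℕ) ∧
    PowerSeries.mk c * (g.reverse : PowerSeries F)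
      = ((Polynomial.reflect (g.natDegree - 1) u : Polynomial F) : PowerSeries F)

lemma coeff_X_mul_gen (p : Polynomial F) (m : ℕ) :
    (X * p).coeff m = if m = 0 then 0 else p.coeff (m-1) := by
  cases m with
  | zero => simp [Polynomial.mul_coeff_zero]
  | succ j => simp [Polynomial.coeff_X_mul]

lemma mk_decomp (c : ℕ → F) :
    PowerSeries.mk c
      = PowerSeries.C (c 0) + PowerSeries.X * PowerSeries.mk (fun i => c (i+1)) := by
  ext n
  cases n with
  | zero => simp
  | succ m => simp [PowerSeries.coeff_succ_X_mul]

lemma revg_ne_zero {g : Polynomial F} (hm : g.Monic) :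
    (g.reverse : PowerSeries F) ≠ 0 := by
  intro h
  have h0 : (PowerSeries.coeff 0) ((g.reverse : Polynomial F) : PowerSeries F) = 0 := by
    rw [h]; simp
  rw [Polynomial.coeff_coe, Polynomial.coeff_zero_reverse, hm.leadingCoeff] at h0
  exact one_ne_zero h0

lemma kron_cancel {g : Polynomial F} (hm : g.Monic) {c d : ℕ → F}
    (h : PowerSeries.mk c * (g.reverse : PowerSeries F)
      = PowerSeries.mk d * (g.reverse : PowerSeries F)) : c = d := by
  have := mul_right_cancel₀ (revg_ne_zero hm) h
  funext i
  have := congrArg (PowerSeries.coeff i) this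
  simpa using this

/-- lead coefficient relation -/
lemma kron_c0 {g u : Polynomial F} (hm : g.Monic) {c : ℕ → F}
    (h : IsKron g u c) : c 0 = u.coeff (g.natDegree - 1) := by
  have h0 := congrArg (PowerSeries.coeff 0) h.2
  rw [PowerSeries.coeff_mul] at h0
  rw [Finset.Nat.antidiagonal_zero, Finset.sum_singleton] at h0
  rw [Polynomial.coeff_coe, Polynomial.coeff_coe, Polynomial.coeff_zero_reverse,
    hm.leadingCoeff, Polynomial.coeff_reflect,
    Polynomial.revAt_le (Nat.zero_le _)] at h0
  simpa using h0

lemma shift_step {g u : Polynomial F} (hm : g.Monic) (hr : 0 < g.natDegree) {c : ℕ → F}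
    (h : IsKron g u c) :
    IsKron g (X * u - C (c 0) * g) (fun i => c (i+1)) := by
  set r := g.natDegree with hrdef
  have hc0 : c 0 = u.coeff (r - 1) := kron_c0 hm h
  have hudeg : ∀ m, r ≤ m → u.coeff m = 0 := fun m hmn =>
    (Polynomial.degree_lt_iff_coeff_zero u r).mp h.1 m hmn
  have hdeg' : (X * u - C (c 0) * g).degree < (r : WithBot ℕ) := by
    rw [Polynomial.degree_lt_iff_coeff_zero]
    intro m hmn
    rw [Polynomial.coeff_sub, coeff_X_mul_gen, Polynomial.coeff_C_mul]
    rw [if_neg (by omega : ¬ m = 0)]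
    rcases Nat.lt_or_ge r m with hlt | hge
    · have h1 : u.coeff (m - 1) = 0 := hudeg _ (by omega)
      have h2 : g.coeff m = 0 := Polynomial.coeff_eq_zero_of_natDegree_lt (by omega)
      simp [h1, h2]
    · have hm' : m = r := le_antisymm hge hmn
      subst hm'
      have h2 : g.coeff r = 1 := hm.coeff_natDegree
      rw [h2, mul_one, hc0, sub_self]
  refine ⟨hdeg', ?_⟩
  -- key polynomial identity
  have key : (X : Polynomial F) * Polynomial.reflect (r-1) (X * u - C (c 0) * g)
      = Polynomial.reflect (r-1) u - C (c 0) * g.reverse := by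
    ext m
    rw [coeff_X_mul_gen, Polynomial.coeff_sub, Polynomial.coeff_C_mul,
      Polynomial.coeff_reverse]
    simp only [Polynomial.coeff_reflect]
    cases m with
    | zero =>
      rw [if_pos rfl, Polynomial.revAt_le (Nat.zero_le _), Polynomial.revAt_le (Nat.zero_le _)]
      simp only [Nat.sub_zero, ← hrdef]
      rw [hm.coeff_natDegree, ← hc0]
      ring
    | succ j =>
      rw [if_neg (by omega : ¬ j + 1 = 0)]
      simp only [Nat.add_sub_cancel]
      rcases Nat.lt_or_ge (r - 1) j with hgt | hle
      · -- j > r-1, so m = j+1 > r : everything vanishes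
        rw [Polynomial.revAt_eq_self_of_lt hgt,
          Polynomial.revAt_eq_self_of_lt (by omega : r - 1 < j + 1),
          Polynomial.revAt_eq_self_of_lt (by omega : r < j + 1)]
        have h1 : (X * u - C (c 0) * g).coeff j = 0 :=
          (Polynomial.degree_lt_iff_coeff_zero _ r).mp hdeg' j (by omega)
        have h2 : u.coeff (j+1) = 0 := hudeg _ (by omega)
        have h3 : g.coeff (j+1) = 0 := Polynomial.coeff_eq_zero_of_natDegree_lt (by omega)
        rw [h1, h2, h3, mul_zero, sub_zero]
      · -- j ≤ r-1
        rw [Polynomial.revAt_le hle, Polynomial.coeff_sub, coeff_X_mul_gen,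
          Polynomial.coeff_C_mul]
        rcases Nat.lt_or_ge j (r-1) with hjlt | hjge
        · -- j < r-1, so m = j+1 ≤ r-1
          rw [Polynomial.revAt_le (by omega : j + 1 ≤ r - 1),
            Polynomial.revAt_le (by omega : j + 1 ≤ r)]
          rw [if_neg (by omega : ¬ r - 1 - j = 0)]
          have e2 : r - 1 - j - 1 = r - 1 - (j+1) := by omega
          have e3 : r - 1 - j = r - (j+1) := by omega
          rw [e2, e3]
        · -- j = r-1, so m = r
          have hj : j = r - 1 := le_antisymm hle hjge
          subst hj
          rw [Polynomial.revAt_eq_self_of_lt (by omega : r - 1 < r - 1 + 1),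
            Polynomial.revAt_le (by omega : r - 1 + 1 ≤ r)]
          have e1 : r - 1 - (r-1) = 0 := by omega
          have e2 : r - (r - 1 + 1) = 0 := by omega
          rw [e1, e2, if_pos rfl]
          have h2 : u.coeff (r - 1 + 1) = 0 := hudeg _ (by omega)
          rw [h2]
  -- transfer to power series
  have hXne : (PowerSeries.X : PowerSeries F) ≠ 0 := PowerSeries.X_ne_zero
  apply mul_left_cancel₀ hXne
  have hcast : ((Polynomial.reflect (r-1) (X * u - C (c 0) * g) : Polynomial F) : PowerSeries F)
      * PowerSeries.X
      = ((Polynomial.reflect (r-1) u : Polynomial F) : PowerSeries F)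
        - PowerSeries.C (c 0) * (g.reverse : PowerSeries F) := by
    have h5 := congrArg (fun (p : Polynomial F) => (p : PowerSeries F)) key
    simp only [Polynomial.coe_mul, Polynomial.coe_sub, Polynomial.coe_X, Polynomial.coe_C] at h5
    rw [mul_comm] at h5
    exact h5
  calc PowerSeries.X * (PowerSeries.mk (fun i => c (i+1)) * (g.reverse : PowerSeries F))
      = (PowerSeries.X * PowerSeries.mk (fun i => c (i+1))) * (g.reverse : PowerSeries F) := by ring
    _ = (PowerSeries.mk c - PowerSeries.C (c 0)) * (g.reverse : PowerSeries F) := by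
        rw [mk_decomp c]; ring
    _ = ((Polynomial.reflect (r-1) u : Polynomial F) : PowerSeries F)
        - PowerSeries.C (c 0) * (g.reverse : PowerSeries F) := by
        rw [sub_mul, h.2]
    _ = ((Polynomial.reflect (r-1) (X * u - C (c 0) * g) : Polynomial F) : PowerSeries F)
        * PowerSeries.X := hcast.symm
    _ = PowerSeries.X * ((Polynomial.reflect (r-1) (X * u - C (c 0) * g) : Polynomial F) : PowerSeries F) := mul_comm _ _

lemma shift_iter {g u : Polynomial F} (hm : g.Monic) (hr : 0 < g.natDegree) {c : ℕ → F}
    (h : IsKron g u c) (k : ℕ) :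
    ∃ v : Polynomial F, IsKron g v (fun i => c (i + k)) ∧ g ∣ X ^ k * u - v := by
  induction k with
  | zero => exact ⟨u, by simpa using h, by simp⟩
  | succ k ih =>
    obtain ⟨v, hv, hdvd⟩ := ih
    refine ⟨X * v - C (c k) * g, ?_, ?_⟩
    · have h6 := shift_step hm hr hv
      have heq : (fun i => (fun j => c (j + k)) (i + 1)) = (fun i => c (i + (k+1))) := by
        funext i; exact congrArg c (by omega)
      rw [heq] at h6
      simpa using h6
    · have h7 : X ^ (k+1) * u - (X * v - C (c k) * g)
          = X * (X ^ k * u - v) + C (c k) * g := by ring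
      rw [h7]
      exact dvd_add (Dvd.dvd.mul_left hdvd X) (Dvd.intro_left _ rfl)

lemma deg_lt_unique {g u v : Polynomial F} (hm : g.Monic)
    (hu : u.degree < (g.natDegree : WithBot ℕ)) (hv : v.degree < (g.natDegree : WithBot ℕ))
    (hdvd : g ∣ u - v) : u = v := by
  have hg0 : g ≠ 0 := hm.ne_zero
  have hdeg : (u - v).degree < g.degree := by
    rw [Polynomial.degree_eq_natDegree hg0]
    calc (u - v).degree ≤ max u.degree v.degree := Polynomial.degree_sub_le u v
      _ < (g.natDegree : WithBot ℕ) := max_lt_iff.mpr ⟨hu, hv⟩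
  have := Polynomial.eq_zero_of_dvd_of_degree_lt hdvd hdeg
  exact sub_eq_zero.mp this

/-- `u` is determined by the first `r` terms of its Kronecker sequence. -/
lemma kron_determined {g u v : Polynomial F} (hr : 0 < g.natDegree)
    {c d : ℕ → F} (hu : IsKron g u c) (hv : IsKron g v d)
    (hcd : ∀ i < g.natDegree, c i = d i) : u = v := by
  set r := g.natDegree with hrdef
  have key : Polynomial.reflect (r-1) u = Polynomial.reflect (r-1) v := by
    ext m
    rcases Nat.lt_or_ge m r with hlt | hge
    · have h1 := congrArg (PowerSeries.coeff m) hu.2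
      have h2 := congrArg (PowerSeries.coeff m) hv.2
      rw [Polynomial.coeff_coe] at h1 h2
      rw [← h1, ← h2, PowerSeries.coeff_mul, PowerSeries.coeff_mul]
      apply Finset.sum_congr rfl
      intro x hx
      rw [Finset.HasAntidiagonal.mem_antidiagonal] at hx
      have hx1 : x.1 < r := by omega
      simp only [PowerSeries.coeff_mk]
      rw [hcd x.1 hx1]
    · rw [Polynomial.coeff_reflect, Polynomial.coeff_reflect,
        Polynomial.revAt_eq_self_of_lt (by omega : r - 1 < m)]
      rw [(Polynomial.degree_lt_iff_coeff_zero u r).mp hu.1 m hge,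
        (Polynomial.degree_lt_iff_coeff_zero v r).mp hv.1 m hge]
  have h1 : Polynomial.reflect (r-1) (Polynomial.reflect (r-1) u) = u := by
    ext i; simp [Polynomial.coeff_reflect, Polynomial.revAt_invol]
  have h2 : Polynomial.reflect (r-1) (Polynomial.reflect (r-1) v) = v := by
    ext i; simp [Polynomial.coeff_reflect, Polynomial.revAt_invol]
  rw [← h1, ← h2, key]

end Aux

lemma exists_pow_eq_one {F : Type} [Field F] [Fintype F] (g : Polynomial F)
    (hm : g.Monic) (hg0 : g.coeff 0 ≠ 0) :
    ∃ e : ℕ, 1 ≤ e ∧ g ∣ X ^ e - 1 := by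
  set I := Ideal.span {g} with hI
  have hfin : Finite (Polynomial F ⧸ I) := by
    have hg : g ≠ 0 := hm.ne_zero
    have pb := AdjoinRoot.powerBasis hg
    exact (Module.fintypeOfFintype pb.basis).finite
  have hXunit : IsUnit (Ideal.Quotient.mk I X) := by
    have hg' : g.divX * X + C (g.coeff 0) = g := Polynomial.divX_mul_X_add g
    have hC : C (g.coeff 0)⁻¹ * C (g.coeff 0) = (1 : Polynomial F) := by
      rw [← C_mul, inv_mul_cancel₀ hg0, C_1]
    have hpoly : X * (-(C (g.coeff 0)⁻¹) * g.divX) = 1 + (-(C (g.coeff 0)⁻¹)) * g := by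
      linear_combination (-(C (g.coeff 0)⁻¹)) * hg' + hC
    have hkey : Ideal.Quotient.mk I X * Ideal.Quotient.mk I (-(C (g.coeff 0)⁻¹) * g.divX) = 1 := by
      rw [← map_mul, hpoly, map_add, map_mul, map_one,
        Ideal.Quotient.eq_zero_iff_mem.mpr (Ideal.subset_span rfl : g ∈ I), mul_zero, add_zero]
    exact isUnit_iff_exists_inv.mpr ⟨_, hkey⟩
  obtain ⟨a, b, hne, hab⟩ := Finite.exists_ne_map_eq_of_infinite
    (fun k : ℕ => (Ideal.Quotient.mk I X) ^ k)
  wlog hlt : a < b generalizing a b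
  · exact this b a hne.symm hab.symm (by omega)
  refine ⟨b - a, by omega, ?_⟩
  have hcancel : (Ideal.Quotient.mk I X) ^ (b - a) = 1 := by
    have h2 : (Ideal.Quotient.mk I X) ^ a * (Ideal.Quotient.mk I X) ^ (b - a)
        = (Ideal.Quotient.mk I X) ^ a * 1 := by
      rw [mul_one, ← pow_add]
      rw [show a + (b - a) = b by omega]
      exact hab.symm
    exact (hXunit.pow a).mul_left_cancel h2
  rw [← Ideal.mem_span_singleton, ← hI, ← Ideal.Quotient.eq_zero_iff_mem]
  rw [map_sub, map_pow, map_one, hcancel, sub_self]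

/-- For `u₁, u₂ ∈ R_g = 𝔽_q[x]/(g)` (with minimal-degree representatives
`u₁(x), u₂(x)` of degree `< r`), `u₂` lies in the `x`-orbit of `u₁` iff the sets
of length-`n` windows of their Kronecker sequences coincide. -/
theorem stmt_6
    (p δ : ℕ) (hp : p.Prime) (hδ : 1 ≤ δ)
    (F : Type) [Field F] [Fintype F] (hcard : Fintype.card F = p ^ δ)
    (r n : ℕ) (g : Polynomial F)
    (hmonic : g.Monic) (hdeg : g.natDegree = r) (hg0 : g.coeff 0 ≠ 0)
    (hr : 0 < r) (hn : r < n)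
    (u1 u2 : Polynomial F)
    (hu1 : u1.degree < (r : WithBot ℕ)) (hu2 : u2.degree < (r : WithBot ℕ))
    (c1 c2 : ℕ → F)
    (hc1 : PowerSeries.mk c1 * (g.reverse : PowerSeries F)
        = ((Polynomial.reflect (r - 1) u1 : Polynomial F) : PowerSeries F))
    (hc2 : PowerSeries.mk c2 * (g.reverse : PowerSeries F)
        = ((Polynomial.reflect (r - 1) u2 : Polynomial F) : PowerSeries F)) :
    (∃ k : ℕ, Ideal.Quotient.mk (Ideal.span {g}) u2
        = Ideal.Quotient.mk (Ideal.span {g}) X ^ k * Ideal.Quotient.mk (Ideal.span {g}) u1)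
    ↔ {w : Fin n → F | ∃ k : ℕ, w = fun i : Fin n => c1 (k + i)}
        = {w : Fin n → F | ∃ k : ℕ, w = fun i : Fin n => c2 (k + i)} := by
  subst hdeg
  have hk1 : IsKron g u1 c1 := ⟨hu1, hc1⟩
  have hk2 : IsKron g u2 c2 := ⟨hu2, hc2⟩
  -- periodicity of c1
  obtain ⟨e, he1, hedvd⟩ := exists_pow_eq_one g hmonic hg0
  obtain ⟨w, hw, hwdvd⟩ := shift_iter hmonic hr hk1 e
  have hwu : w = u1 := by
    apply deg_lt_unique hmonic hw.1 hk1.1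
    have h9 : w - u1 = -((X ^ e * u1 - w) - (X ^ e - 1) * u1) := by ring
    rw [h9]
    exact dvd_neg.mpr (dvd_sub hwdvd (hedvd.mul_right u1))
  rw [hwu] at hw
  have hper : ∀ i, c1 (i + e) = c1 i := by
    intro i
    exact congrFun (kron_cancel hmonic (hw.2.trans hk1.2.symm)) i
  have hperiter : ∀ t i, c1 (i + t * e) = c1 i := by
    intro t
    induction t with
    | zero => intro i; simp
    | succ t ih =>
      intro i
      have h10 : i + (t+1) * e = (i + t * e) + e := by ring
      rw [h10, hper (i + t * e), ih i]
  constructor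
  · rintro ⟨k, hk⟩
    -- g ∣ X^k * u1 - u2
    have hdvd : g ∣ X ^ k * u1 - u2 := by
      rw [← Ideal.mem_span_singleton, ← Ideal.Quotient.eq_zero_iff_mem, map_sub, map_mul,
        map_pow, ← hk, sub_self]
    obtain ⟨v, hv, hvdvd⟩ := shift_iter hmonic hr hk1 k
    have hveq : u2 = v := by
      apply deg_lt_unique hmonic hk2.1 hv.1
      have h9 : u2 - v = (X ^ k * u1 - v) - (X ^ k * u1 - u2) := by ring
      rw [h9]
      exact dvd_sub hvdvd hdvd
    have hc2eq : c2 = fun i => c1 (i + k) :=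
      kron_cancel hmonic (hk2.2.trans (by rw [hveq]; exact hv.2.symm))
    ext w0
    simp only [Set.mem_setOf_eq]
    constructor
    · rintro ⟨m, rfl⟩
      refine ⟨m + k * e - k, ?_⟩
      funext i
      rw [hc2eq]
      show c1 (m + ↑i) = c1 ((m + k * e - k) + ↑i + k)
      have h11 : (m + k * e - k) + ↑i + k = (m + ↑i) + k * e := by
        have : k ≤ k * e := Nat.le_mul_of_pos_right k (by omega)
        omega
      rw [h11, hperiter k (m + ↑i)]
    · rintro ⟨m, rfl⟩
      refine ⟨k + m, ?_⟩
      funext i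
      rw [hc2eq]
      show c1 (m + ↑i + k) = c1 ((k + m) + ↑i)
      exact congrArg c1 (by omega)
  · intro hset
    have h0 : (fun i : Fin n => c2 (0 + ↑i)) ∈
        {w : Fin n → F | ∃ k : ℕ, w = fun i : Fin n => c2 (k + i)} := ⟨0, rfl⟩
    rw [← hset] at h0
    obtain ⟨k, hk⟩ := h0
    obtain ⟨v, hv, hvdvd⟩ := shift_iter hmonic hr hk1 k
    have hcd : ∀ i, i < g.natDegree → c2 i = c1 (i + k) := by
      intro i hi
      have h12 := congrFun hk ⟨i, by omega⟩
      simp only at h12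
      rw [show (0 : ℕ) + ↑(⟨i, by omega⟩ : Fin n) = i by simp] at h12
      rw [h12]
      exact congrArg c1 (Nat.add_comm k i)
    have hu2v : u2 = v := kron_determined hr hk2 hv hcd
    refine ⟨k, ?_⟩
    have h13 : Ideal.Quotient.mk (Ideal.span {g}) (X ^ k * u1 - u2) = 0 := by
      apply Ideal.Quotient.eq_zero_iff_mem.mpr
      apply Ideal.mem_span_singleton.mpr
      rw [hu2v]
      exact hvdvd
    rw [map_sub, map_mul, map_pow, sub_eq_zero] at h13
    exact h13.symm
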